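/- Assume that for i = 1,2 the initial datum satisfies lim_{‖x‖→∞} φ_i(x) = sup_{x∈ℝⁿ} φ_i(x) (limit along the filter of complements of compact subsets of ℝⁿ). If (u₁,u₂) is a mild solution on [0,T), then for every t ∈ [0,T), i = 1,2 and j = 3−i: liminf_{‖x‖→∞} u_i(t,x) ≥ sup_{ℝⁿ} φ_i + ∫₀ᵗ h_i(s)·(liminf_{‖x‖→∞} u_i(s,x))^{p_ii}·(liminf_{‖x‖→∞} u_j(s,x))^{p_ij} ds, where liminf_{‖x‖→∞} is the limit inferior along the filter of complements of compact subsets of ℝⁿ. -/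

import Mathlib

open MeasureTheory Set Filter

/-- The Gaussian heat kernel `G(t,x) = (4πt)^(-n/2) exp(-‖x‖²/(4t))` on `ℝⁿ`. -/
noncomputable def gaussianKernel (n : ℕ) (t : ℝ) (x : EuclideanSpace ℝ (Fin n)) : ℝ :=
  (4 * Real.pi * t) ^ (-(n : ℝ) / 2) * Real.exp (-‖x‖ ^ 2 / (4 * t))

/-- `Kint k s t = ∫_s^t k(r) dr`. -/
noncomputable def Kint (k : ℝ → ℝ) (s t : ℝ) : ℝ := ∫ r in s..t, k r

/-- A mild solution of the reaction-diffusion system on the half-open time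
interval `[0,T)`: a pair of nonnegative measurable functions, bounded on
`[0,t'] × ℝⁿ` for every `t' < T`, with initial data `φ`, satisfying the
Duhamel integral equations for every `t ∈ (0,T)` and `x ∈ ℝⁿ`. -/
def IsMildSolutionIco (n : ℕ) (p : Fin 2 → Fin 2 → ℝ) (h k : Fin 2 → ℝ → ℝ)
    (φ : Fin 2 → EuclideanSpace ℝ (Fin n) → ℝ) (T : ℝ)
    (u : Fin 2 → ℝ → EuclideanSpace ℝ (Fin n) → ℝ) : Prop :=
  (∀ i, Measurable (Function.uncurry (u i))) ∧
  (∀ i t x, 0 ≤ u i t x) ∧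
  (∀ t' : ℝ, t' < T → ∃ C : ℝ, ∀ i, ∀ t ∈ Set.Icc (0:ℝ) t', ∀ x, u i t x ≤ C) ∧
  (∀ i x, u i 0 x = φ i x) ∧
  (∀ i, ∀ t ∈ Set.Ioo (0:ℝ) T, ∀ x,
    u i t x =
      (∫ y, gaussianKernel n (Kint (k i) 0 t) (x - y) * φ i y) +
        ∫ s in (0:ℝ)..t,
          h i s *
            ∫ y, gaussianKernel n (Kint (k i) s t) (x - y) *
              (u i s y ^ p i i * u (1 - i) s y ^ p i (1 - i)))

/-! ### Auxiliary lemmas -/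

set_option linter.unusedSectionVars false
set_option maxHeartbeats 1000000

section LiminfHelpers
variable {α : Type*} {l : Filter α} [l.NeBot] {f g : α → ℝ} {C c a : ℝ}

lemma myBddGe (h0 : ∀ x, 0 ≤ f x) : IsBoundedUnder (· ≥ ·) l f :=
  isBoundedUnder_of ⟨0, h0⟩

lemma myCobGe (hC : ∀ x, f x ≤ C) : IsCoboundedUnder (· ≥ ·) l f :=
  (isBoundedUnder_of ⟨C, hC⟩).isCoboundedUnder_ge

lemma my_le_liminf (hC : ∀ x, f x ≤ C) (h : ∀ c < a, ∀ᶠ x in l, c ≤ f x) :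
    a ≤ liminf f l := by
  refine le_of_forall_lt fun c hc => ?_
  obtain ⟨c', hc1, hc2⟩ := exists_between hc
  exact lt_of_lt_of_le hc1 (le_liminf_of_le (myCobGe hC) (h c' hc2))

lemma my_liminf_nonneg (h0 : ∀ x, 0 ≤ f x) (hC : ∀ x, f x ≤ C) : 0 ≤ liminf f l :=
  le_liminf_of_le (myCobGe hC) (Eventually.of_forall h0)

lemma my_liminf_le (h0 : ∀ x, 0 ≤ f x) (hC : ∀ x, f x ≤ C) : liminf f l ≤ C :=
  liminf_le_of_frequently_le (Frequently.of_forall hC) (myBddGe h0)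

lemma my_ev_lt (h0 : ∀ x, 0 ≤ f x) (hc : c < liminf f l) : ∀ᶠ x in l, c < f x :=
  eventually_lt_of_lt_liminf hc (myBddGe h0)

/-- superadditivity of liminf for bounded nonneg functions -/
lemma my_liminf_add (h0 : ∀ x, 0 ≤ f x) (hC : ∀ x, f x ≤ C)
    (g0 : ∀ x, 0 ≤ g x) (gC : ∀ x, g x ≤ C) :
    liminf f l + liminf g l ≤ liminf (fun x => f x + g x) l := by
  refine my_le_liminf (C := C + C) (fun x => add_le_add (hC x) (gC x)) fun c hc => ?_
  set δ := (liminf f l + liminf g l - c) / 2 with hδ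
  have hδ0 : 0 < δ := by simp only [hδ]; linarith
  have h1 := my_ev_lt (l := l) h0 (show liminf f l - δ < liminf f l by linarith)
  have h2 := my_ev_lt (l := l) g0 (show liminf g l - δ < liminf g l by linarith)
  filter_upwards [h1, h2] with x hx1 hx2
  have : c = (liminf f l - δ) + (liminf g l - δ) := by rw [hδ]; ring
  rw [this]; exact add_le_add hx1.le hx2.le

lemma my_liminf_const_mul (h0 : ∀ x, 0 ≤ f x) (hC : ∀ x, f x ≤ C) (hc : 0 ≤ c) :
    c * liminf f l ≤ liminf (fun x => c * f x) l := by
  rcases eq_or_lt_of_le hc with h | h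
  · simp only [← h, zero_mul]
    exact my_liminf_nonneg (fun x => le_refl 0) (fun x => le_refl (0:ℝ))
  refine my_le_liminf (C := c * C)
    (fun x => mul_le_mul_of_nonneg_left (hC x) hc) fun d hd => ?_
  have h1 := my_ev_lt (l := l) h0 (show d / c < liminf f l by
    rw [div_lt_iff₀ h]; linarith [hd])
  filter_upwards [h1] with x hx
  calc d = c * (d / c) := by field_simp
  _ ≤ c * f x := mul_le_mul_of_nonneg_left hx.le hc

lemma my_liminf_mul (h0 : ∀ x, 0 ≤ f x) (hC : ∀ x, f x ≤ C)
    (g0 : ∀ x, 0 ≤ g x) (gC : ∀ x, g x ≤ C) :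
    liminf f l * liminf g l ≤ liminf (fun x => f x * g x) l := by
  set a := liminf f l with ha'
  set b := liminf g l with hb'
  have ha0 : 0 ≤ a := my_liminf_nonneg h0 hC
  have hb0 : 0 ≤ b := my_liminf_nonneg g0 gC
  refine my_le_liminf (C := C * C)
    (fun x => mul_le_mul (hC x) (gC x) (g0 x) ((h0 x).trans (hC x))) fun c hc => ?_
  rcases lt_or_ge c 0 with h | h
  · exact Eventually.of_forall fun x => h.le.trans (mul_nonneg (h0 x) (g0 x))
  have hab : 0 < a * b := lt_of_le_of_lt h hc
  have ha : 0 < a := by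
    rcases ha0.lt_or_eq with h' | h'
    · exact h'
    · exfalso; rw [← h', zero_mul] at hab; exact lt_irrefl 0 hab
  have hb : 0 < b := by
    rcases hb0.lt_or_eq with h' | h'
    · exact h'
    · exfalso; rw [← h', mul_zero] at hab; exact lt_irrefl 0 hab
  have cont : Tendsto (fun δ : ℝ => (a - δ) * (b - δ)) (nhdsWithin 0 (Ioi 0)) (nhds (a * b)) := by
    have hcc : Continuous (fun δ : ℝ => (a - δ) * (b - δ)) := by continuity
    have := hcc.tendsto 0
    simp only [sub_zero] at this
    exact this.mono_left nhdsWithin_le_nhds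
  have hev : ∀ᶠ δ in nhdsWithin (0:ℝ) (Ioi 0), c < (a - δ) * (b - δ) :=
    cont.eventually (eventually_gt_nhds hc)
  have hmem : Ioo (0:ℝ) (min a b) ∈ nhdsWithin (0:ℝ) (Ioi 0) :=
    Ioo_mem_nhdsGT_of_mem ⟨le_refl 0, lt_min ha hb⟩
  obtain ⟨δ, hδ1, hδ2⟩ := (hev.and (eventually_of_mem hmem fun x hx => hx)).exists
  have h1 := my_ev_lt (l := l) h0 (show a - δ < a by linarith [hδ2.1])
  have h2 := my_ev_lt (l := l) g0 (show b - δ < b by linarith [hδ2.1])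
  filter_upwards [h1, h2] with x hx1 hx2
  refine hδ1.le.trans (mul_le_mul hx1.le hx2.le ?_ (h0 x))
  have := hδ2.2
  simp only [lt_min_iff] at this
  linarith [this.2]

lemma my_liminf_rpow (h0 : ∀ x, 0 ≤ f x) (hC : ∀ x, f x ≤ C) {q : ℝ} (hq : 0 ≤ q) :
    (liminf f l) ^ q ≤ liminf (fun x => f x ^ q) l := by
  rcases eq_or_lt_of_le hq with hq0 | hq0
  · simp only [← hq0, Real.rpow_zero]
    exact le_of_eq (liminf_const (1:ℝ)).symm
  set a := liminf f l with ha'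
  have ha0 : 0 ≤ a := my_liminf_nonneg h0 hC
  have hC0 : (0:ℝ) ≤ C := ha0.trans (my_liminf_le h0 hC)
  refine my_le_liminf (C := C ^ q)
    (fun x => Real.rpow_le_rpow (h0 x) (hC x) hq) fun c hc => ?_
  rcases lt_or_ge c 0 with h | h
  · exact Eventually.of_forall fun x => h.le.trans (Real.rpow_nonneg (h0 x) q)
  have ha : 0 < a := by
    rcases ha0.lt_or_eq with h' | h'
    · exact h'
    · exfalso
      rw [← h', Real.zero_rpow hq0.ne'] at hc
      exact absurd hc (not_lt.mpr h)
  have cont : Tendsto (fun δ : ℝ => (a - δ) ^ q) (nhdsWithin 0 (Ioi 0)) (nhds (a ^ q)) := by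
    have hrc : ContinuousAt (fun z : ℝ => z ^ q) a :=
      Real.continuousAt_rpow_const a q (Or.inl ha.ne')
    have hsc : Tendsto (fun δ : ℝ => a - δ) (nhdsWithin 0 (Ioi 0)) (nhds a) := by
      have hcc : Continuous (fun δ : ℝ => a - δ) := by continuity
      have := hcc.tendsto (0:ℝ)
      simp only [sub_zero] at this
      exact this.mono_left nhdsWithin_le_nhds
    exact hrc.tendsto.comp hsc
  have hev : ∀ᶠ δ in nhdsWithin (0:ℝ) (Ioi 0), c < (a - δ) ^ q :=
    cont.eventually (eventually_gt_nhds hc)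
  have hmem : Ioo (0:ℝ) a ∈ nhdsWithin (0:ℝ) (Ioi 0) :=
    Ioo_mem_nhdsGT_of_mem ⟨le_refl 0, ha⟩
  obtain ⟨δ, hδ1, hδ2⟩ := (hev.and (eventually_of_mem hmem fun x hx => hx)).exists
  have h1 := my_ev_lt (l := l) h0 (show a - δ < a by linarith [hδ2.1])
  filter_upwards [h1] with x hx
  exact hδ1.le.trans (Real.rpow_le_rpow (by linarith [hδ2.2]) hx.le hq)

lemma my_liminf_comp {x : ℕ → α} (hx : Tendsto x atTop l)
    (h0 : ∀ y, 0 ≤ f y) (hC : ∀ y, f y ≤ C) :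
    liminf f l ≤ liminf (fun m => f (x m)) atTop := by
  haveI : (Filter.map x atTop).NeBot := map_neBot
  have h := liminf_le_liminf_of_le (u := f) hx (myBddGe h0)
    (myCobGe (l := Filter.map x atTop) hC)
  rwa [liminf, liminf, map_map] at h

end LiminfHelpers

lemma myBddGe' {α : Type*} {l : Filter α} {f : α → ℝ} (h0 : ∀ x, 0 ≤ f x) :
    IsBoundedUnder (· ≥ ·) l f := isBoundedUnder_of ⟨0, h0⟩

lemma my_fatou {α : Type*} [MeasurableSpace α] {μ : Measure α} [IsFiniteMeasure μ]
    {f : ℕ → α → ℝ} {g : α → ℝ} {D : ℝ}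
    (hmeas : ∀ m, AEStronglyMeasurable (f m) μ)
    (hbd : ∀ m, ∀ᵐ x ∂μ, 0 ≤ f m x ∧ f m x ≤ D)
    (hg : Integrable g μ) (hg0 : 0 ≤ᵐ[μ] g)
    (hle : ∀ᵐ x ∂μ, g x ≤ liminf (fun m => f m x) atTop) :
    ∫ x, g x ∂μ ≤ liminf (fun m => ∫ x, f m x ∂μ) atTop := by
  have hint : ∀ m, Integrable (f m) μ := fun m =>
    Integrable.mono' (integrable_const D) (hmeas m)
      ((hbd m).mono fun x hx => by
        rw [Real.norm_eq_abs, abs_of_nonneg hx.1]; exact hx.2)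
  set a : ℕ → ℝ := fun m => ∫ x, f m x ∂μ with ha
  have ha0 : ∀ m, 0 ≤ a m := fun m =>
    integral_nonneg_of_ae ((hbd m).mono fun x hx => hx.1)
  set Dμ : ℝ := D * (μ univ).toReal with hDμ
  have haD : ∀ m, a m ≤ Dμ := by
    intro m
    have := integral_mono_ae (hint m) (integrable_const D) ((hbd m).mono fun x hx => hx.2)
    have h2 : a m ≤ D * μ.real univ := by simpa [integral_const, smul_eq_mul, mul_comm] using this
    exact h2
  have key : ∀ ε : ℝ, 0 < ε → ∫ x, g x ∂μ ≤ liminf a atTop + ε := by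
    intro ε hε
    have hZ : 0 ≤ liminf a atTop + ε := by
      have h00 : (0:ℝ) ≤ liminf a atTop :=
        le_liminf_of_le (f := atTop) ((isBoundedUnder_of ⟨Dμ, haD⟩).isCoboundedUnder_ge)
          (Eventually.of_forall ha0)
      linarith
    rw [← ENNReal.ofReal_le_ofReal_iff hZ,
      MeasureTheory.ofReal_integral_eq_lintegral_ofReal hg hg0]
    have step2 : ∫⁻ x, ENNReal.ofReal (g x) ∂μ ≤
        ∫⁻ x, liminf (fun m => ENNReal.ofReal (f m x)) atTop ∂μ := by
      refine lintegral_mono_ae ?_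
      filter_upwards [hle, ae_all_iff.mpr hbd] with x hx hbx
      have hbound : ∀ m, 0 ≤ f m x := fun m => (hbx m).1
      refine ENNReal.le_of_forall_pos_le_add fun δ hδ hfin => ?_
      have h1 : ENNReal.ofReal (g x) ≤ ENNReal.ofReal (g x - δ) + ENNReal.ofReal δ := by
        calc ENNReal.ofReal (g x) = ENNReal.ofReal ((g x - δ) + δ) := by ring_nf
        _ ≤ _ := ENNReal.ofReal_add_le
      refine h1.trans ?_
      have h2 : ENNReal.ofReal (g x - δ) ≤ liminf (fun m => ENNReal.ofReal (f m x)) atTop := by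
        rcases lt_or_ge (g x - δ) 0 with hneg | hpos
        · simp [ENNReal.ofReal_of_nonpos hneg.le]
        · have hlt : (g x - δ : ℝ) < liminf (fun m => f m x) atTop := by
            have hδ' : (0:ℝ) < δ := hδ
            linarith
          have hevm : ∀ᶠ m in atTop, (g x - δ : ℝ) < f m x :=
            eventually_lt_of_lt_liminf hlt (myBddGe' hbound)
          exact le_liminf_of_le (by isBoundedDefault)
            (hevm.mono fun m hm => ENNReal.ofReal_le_ofReal hm.le)
      refine add_le_add h2 ?_
      simp [ENNReal.ofReal_coe_nnreal]
    refine (step2.trans ?_)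
    have step3 := lintegral_liminf_le'
      (fun m => ENNReal.measurable_ofReal.comp_aemeasurable (hmeas m).aemeasurable)
      (μ := μ) (u := atTop)
    simp only [Function.comp] at step3
    refine step3.trans ?_
    have step4 : ∀ m, ∫⁻ x, ENNReal.ofReal (f m x) ∂μ = ENNReal.ofReal (a m) := fun m =>
      (MeasureTheory.ofReal_integral_eq_lintegral_ofReal (hint m)
        ((hbd m).mono fun x hx => hx.1)).symm
    have step5 : liminf (fun m => ∫⁻ x, ENNReal.ofReal (f m x) ∂μ) atTop
        = liminf (fun m => ENNReal.ofReal (a m)) atTop :=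
      liminf_congr (Eventually.of_forall step4)
    rw [step5]
    have hfr : ∃ᶠ m in atTop, a m < liminf a atTop + ε := by
      refine frequently_lt_of_liminf_lt ((isBoundedUnder_of ⟨Dμ, haD⟩).isCoboundedUnder_ge) ?_
      linarith [le_refl (liminf a atTop)]
    exact liminf_le_of_frequently_le'
      (hfr.mono fun m hm => ENNReal.ofReal_le_ofReal hm.le)
  exact le_of_forall_pos_le_add key

lemma my_exists_seq {α : Type*} {l : Filter α} [l.NeBot] [l.IsCountablyGenerated]
    {B : α → ℝ} (h0 : ∀ x, 0 ≤ B x) {C : ℝ} (hC : ∀ x, B x ≤ C)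
    {c : ℝ} (hc : liminf B l < c) :
    ∃ x : ℕ → α, Tendsto x atTop l ∧ liminf (fun m => B (x m)) atTop ≤ c := by
  have hfreq : ∃ᶠ y in l, B y < c :=
    frequently_lt_of_liminf_lt ((isBoundedUnder_of ⟨C, hC⟩).isCoboundedUnder_ge) hc
  have hne : (l ⊓ 𝓟 {y | B y < c}).NeBot := frequently_iff_neBot.mp hfreq
  obtain ⟨x, hx⟩ := (l ⊓ 𝓟 {y | B y < c}).exists_seq_tendsto
  refine ⟨x, hx.mono_right inf_le_left, ?_⟩
  have hev : ∀ᶠ m in atTop, B (x m) < c :=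
    tendsto_principal.mp (hx.mono_right inf_le_right)
  exact liminf_le_of_frequently_le (hev.frequently.mono fun m hm => hm.le)
    (myBddGe' fun m => h0 (x m))

/-- measurability of `x ↦ f x ^ q` for nonnegative measurable `f`. -/
lemma measurable_rpow_const_of_nonneg {α : Type*} [MeasurableSpace α] {f : α → ℝ}
    (hf : Measurable f) (h0 : ∀ x, 0 ≤ f x) (q : ℝ) :
    Measurable fun x => f x ^ q := by
  have heq : (fun x => f x ^ q) = fun x =>
      if f x = 0 then (if q = 0 then 1 else 0) else Real.exp (Real.log (f x) * q) := by
    funext x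
    rcases (h0 x).lt_or_eq with h | h
    · rw [if_neg h.ne', Real.rpow_def_of_pos h]
    · rw [← h, if_pos rfl]
      rcases eq_or_ne q 0 with hq | hq
      · rw [if_pos hq, hq, Real.rpow_zero]
      · rw [if_neg hq, Real.zero_rpow hq]
  rw [heq]
  exact Measurable.ite (hf (measurableSet_singleton 0)) measurable_const
    ((Real.measurable_log.comp hf).mul_const q).exp

section Gaussian
variable {n : ℕ}

lemma gaussianKernel_nonneg {τ : ℝ} (hτ : 0 ≤ τ) (x : EuclideanSpace ℝ (Fin n)) :
    0 ≤ gaussianKernel n τ x :=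
  mul_nonneg (Real.rpow_nonneg (by positivity) _) (Real.exp_nonneg _)

lemma continuous_gaussianKernel (τ : ℝ) : Continuous (gaussianKernel n τ) := by
  unfold gaussianKernel
  exact continuous_const.mul ((continuous_norm.pow 2).neg.div_const _).rexp

lemma integrable_rexp_neg_mul_sq_norm' {b : ℝ} (hb : 0 < b) :
    Integrable fun v : EuclideanSpace ℝ (Fin n) => Real.exp (-b * ‖v‖ ^ 2) := by
  have h := (GaussianFourier.integrable_cexp_neg_mul_sq_norm_add
      (V := EuclideanSpace ℝ (Fin n)) (b := (b : ℂ)) (by simpa using hb) 0 0).norm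
  simp only [zero_mul, add_zero] at h
  have e : ∀ v : EuclideanSpace ℝ (Fin n),
      ‖Complex.exp (-(b:ℂ) * (‖v‖:ℂ) ^ 2)‖ = Real.exp (-b * ‖v‖ ^ 2) := by
    intro v
    rw [Complex.norm_exp]
    norm_num [← Complex.ofReal_pow]
  exact h.congr (Eventually.of_forall e)

lemma integrable_gaussianKernel {τ : ℝ} (hτ : 0 < τ) :
    Integrable (gaussianKernel n τ) := by
  have h := (integrable_rexp_neg_mul_sq_norm' (n := n) (b := 1/(4*τ)) (by positivity)).const_mul
      ((4 * Real.pi * τ) ^ (-(n : ℝ) / 2))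
  convert h using 2 with v
  unfold gaussianKernel
  congr 1
  rw [neg_div, neg_mul]
  congr 1
  field_simp

lemma integral_gaussianKernel {τ : ℝ} (hτ : 0 < τ) :
    ∫ x : EuclideanSpace ℝ (Fin n), gaussianKernel n τ x = 1 := by
  unfold gaussianKernel
  rw [MeasureTheory.integral_const_mul]
  have hb : (0:ℝ) < 1/(4*τ) := by positivity
  have h1 : ∀ x : EuclideanSpace ℝ (Fin n),
      Real.exp (-‖x‖ ^ 2 / (4 * τ)) = Real.exp (-(1/(4*τ)) * ‖x‖ ^ 2) := by
    intro x; congr 1; field_simp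
  simp_rw [h1]
  rw [GaussianFourier.integral_rexp_neg_mul_sq_norm hb]
  rw [finrank_euclideanSpace_fin]
  have h2 : Real.pi / (1/(4*τ)) = 4 * Real.pi * τ := by field_simp
  rw [h2, ← Real.rpow_add (by positivity), neg_div, neg_add_cancel, Real.rpow_zero]

lemma integral_gaussianKernel_sub {τ : ℝ} (hτ : 0 < τ) (x : EuclideanSpace ℝ (Fin n)) :
    ∫ y : EuclideanSpace ℝ (Fin n), gaussianKernel n τ (x - y) = 1 := by
  rw [integral_sub_left_eq_self (gaussianKernel n τ) volume x]
  exact integral_gaussianKernel hτ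

lemma integrable_gaussianKernel_sub {τ : ℝ} (hτ : 0 < τ) (x : EuclideanSpace ℝ (Fin n)) :
    Integrable fun y : EuclideanSpace ℝ (Fin n) => gaussianKernel n τ (x - y) :=
  (integrable_gaussianKernel hτ).comp_sub_left x

lemma integrable_gaussianKernel_mul {τ : ℝ} (hτ : 0 < τ) {F : EuclideanSpace ℝ (Fin n) → ℝ}
    (hFm : AEStronglyMeasurable F volume) (hF0 : ∀ y, 0 ≤ F y) {M : ℝ} (hFM : ∀ y, F y ≤ M)
    (x : EuclideanSpace ℝ (Fin n)) :
    Integrable fun y => gaussianKernel n τ (x - y) * F y := by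
  have h := Integrable.bdd_mul (f := F) (g := fun y => gaussianKernel n τ (x - y)) (c := M)
    (integrable_gaussianKernel_sub hτ x) hFm (Eventually.of_forall fun y => by
      rw [Real.norm_eq_abs, abs_of_nonneg (hF0 y)]; exact hFM y)
  exact h.congr (Eventually.of_forall fun y => mul_comm _ _)

lemma conv_le_bound {τ : ℝ} (hτ : 0 < τ) {F : EuclideanSpace ℝ (Fin n) → ℝ}
    (hFm : AEStronglyMeasurable F volume) (hF0 : ∀ y, 0 ≤ F y) {M : ℝ} (hFM : ∀ y, F y ≤ M)
    (x : EuclideanSpace ℝ (Fin n)) :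
    (∫ y, gaussianKernel n τ (x - y) * F y) ≤ M := by
  calc (∫ y, gaussianKernel n τ (x - y) * F y)
      ≤ ∫ y, gaussianKernel n τ (x - y) * M := by
        apply integral_mono (integrable_gaussianKernel_mul hτ hFm hF0 hFM x)
          ((integrable_gaussianKernel_sub hτ x).mul_const M)
        exact fun y => mul_le_mul_of_nonneg_left (hFM y) (gaussianKernel_nonneg hτ.le _)
  _ = (∫ y, gaussianKernel n τ (x - y)) * M := integral_mul_const _ _
  _ = M := by rw [integral_gaussianKernel_sub hτ, one_mul]

lemma tendsto_setIntegral_gaussianKernel_zero {τ : ℝ} (hτ : 0 < τ)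
    {K : Set (EuclideanSpace ℝ (Fin n))} (hK : IsCompact K) :
    Tendsto (fun x : EuclideanSpace ℝ (Fin n) => ∫ y in K, gaussianKernel n τ (x - y))
      (cocompact (EuclideanSpace ℝ (Fin n))) (nhds 0) := by
  obtain ⟨R, hR0, hKR⟩ := hK.isBounded.subset_closedBall_lt 0 0
  set c : ℝ := (4 * Real.pi * τ) ^ (-(n : ℝ) / 2) with hc
  have hc0 : 0 ≤ c := Real.rpow_nonneg (by positivity) _
  set M : ℝ := (volume K).toReal with hM
  have hM0 : 0 ≤ M := ENNReal.toReal_nonneg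
  set g : EuclideanSpace ℝ (Fin n) → ℝ :=
    fun x => c * Real.exp (-(‖x‖ - R) ^ 2 / (4 * τ)) * M with hg
  have hgt : Tendsto g (cocompact (EuclideanSpace ℝ (Fin n))) (nhds 0) := by
    have h1 : Tendsto (fun r : ℝ => (r - R) ^ 2 / (4 * τ)) atTop atTop := by
      apply Tendsto.atTop_div_const (by positivity)
      exact (tendsto_pow_atTop (two_ne_zero)).comp
        (tendsto_atTop_add_const_right _ (-R) tendsto_id)
    have h3 : Tendsto (fun r : ℝ => Real.exp (-(r - R) ^ 2 / (4 * τ))) atTop (nhds 0) := by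
      have h4 := Real.tendsto_exp_neg_atTop_nhds_zero.comp h1
      refine h4.congr fun r => ?_
      simp [Function.comp, neg_div]
    have h2 : Tendsto (fun r : ℝ => c * Real.exp (-(r - R) ^ 2 / (4 * τ)) * M) atTop (nhds 0) := by
      have := (h3.const_mul c).mul_const M
      simpa using this
    exact h2.comp tendsto_norm_cocompact_atTop
  apply squeeze_zero' (t₀ := cocompact (EuclideanSpace ℝ (Fin n)))
  · exact Eventually.of_forall fun x =>
      setIntegral_nonneg hK.measurableSet fun y _ => gaussianKernel_nonneg hτ.le _
  · filter_upwards [tendsto_norm_cocompact_atTop.eventually_ge_atTop R] with x hx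
    have hb : ∀ y ∈ K, ‖gaussianKernel n τ (x - y)‖ ≤
        c * Real.exp (-(‖x‖ - R) ^ 2 / (4 * τ)) := by
      intro y hy
      have hyR : ‖y‖ ≤ R := by
        have := hKR hy
        simpa [Metric.mem_closedBall, dist_eq_norm] using this
      have h5 : ‖x‖ - R ≤ ‖x - y‖ := by
        have := norm_sub_norm_le x y
        linarith
      have h6 : (‖x‖ - R) ^ 2 ≤ ‖x - y‖ ^ 2 := pow_le_pow_left₀ (by linarith) h5 2
      rw [Real.norm_eq_abs, abs_of_nonneg (gaussianKernel_nonneg hτ.le _)]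
      unfold gaussianKernel
      rw [← hc]
      apply mul_le_mul_of_nonneg_left _ hc0
      apply Real.exp_le_exp.mpr
      rw [neg_div, neg_div, neg_le_neg_iff]
      exact (div_le_div_iff_of_pos_right (by positivity)).mpr h6
    have hle := norm_setIntegral_le_of_norm_le_const (μ := volume) (s := K)
      hK.measure_lt_top hb
    calc (∫ y in K, gaussianKernel n τ (x - y)) ≤ ‖∫ y in K, gaussianKernel n τ (x - y)‖ :=
        le_abs_self _
    _ ≤ c * Real.exp (-(‖x‖ - R) ^ 2 / (4 * τ)) * M := hle
  · exact hgt

lemma le_liminf_conv [NeBot (cocompact (EuclideanSpace ℝ (Fin n)))]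
    {τ : ℝ} (hτ : 0 < τ) {F : EuclideanSpace ℝ (Fin n) → ℝ}
    (hFm : AEStronglyMeasurable F volume) (hF0 : ∀ y, 0 ≤ F y) {M : ℝ} (hFM : ∀ y, F y ≤ M) :
    liminf F (cocompact (EuclideanSpace ℝ (Fin n))) ≤
      liminf (fun x => ∫ y, gaussianKernel n τ (x - y) * F y)
        (cocompact (EuclideanSpace ℝ (Fin n))) := by
  have hM0 : 0 ≤ M := (hF0 0).trans (hFM 0)
  have hGint : ∀ x, Integrable fun y : EuclideanSpace ℝ (Fin n) => gaussianKernel n τ (x - y) :=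
    integrable_gaussianKernel_sub hτ
  have hint : ∀ x, Integrable fun y => gaussianKernel n τ (x - y) * F y :=
    integrable_gaussianKernel_mul hτ hFm hF0 hFM
  have hInn : ∀ x, 0 ≤ ∫ y, gaussianKernel n τ (x - y) * F y := fun x =>
    integral_nonneg fun y => mul_nonneg (gaussianKernel_nonneg hτ.le _) (hF0 y)
  refine my_le_liminf (conv_le_bound hτ hFm hF0 hFM) fun c hc => ?_
  rcases lt_or_ge c 0 with hc0 | hc0
  · exact Eventually.of_forall fun x => hc0.le.trans (hInn x)
  obtain ⟨c', hcc', hc'⟩ := exists_between hc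
  have hc'0 : 0 < c' := lt_of_le_of_lt hc0 hcc'
  have hev : ∀ᶠ y in cocompact (EuclideanSpace ℝ (Fin n)), c' < F y := my_ev_lt hF0 hc'
  obtain ⟨K, hKc, hKs⟩ := mem_cocompact.mp hev
  have htend := tendsto_setIntegral_gaussianKernel_zero hτ hKc
  have hpos : (0:ℝ) < (c' - c) / c' := div_pos (by linarith) hc'0
  filter_upwards [htend.eventually (eventually_lt_nhds hpos)] with x hx
  have hsplit : (∫ y in K, gaussianKernel n τ (x - y)) +
      (∫ y in Kᶜ, gaussianKernel n τ (x - y)) = 1 := by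
    rw [integral_add_compl hKc.measurableSet (hGint x), integral_gaussianKernel_sub hτ]
  calc c = (1 - (c' - c) / c') * c' := by field_simp; ring
  _ ≤ (1 - ∫ y in K, gaussianKernel n τ (x - y)) * c' := by
      apply mul_le_mul_of_nonneg_right _ hc'0.le
      linarith
  _ = (∫ y in Kᶜ, gaussianKernel n τ (x - y)) * c' := by rw [← hsplit]; ring
  _ = ∫ y in Kᶜ, gaussianKernel n τ (x - y) * c' := (integral_mul_const _ _).symm
  _ ≤ ∫ y in Kᶜ, gaussianKernel n τ (x - y) * F y := by
      apply setIntegral_mono_on ((hGint x).mul_const c').integrableOn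
        (hint x).integrableOn hKc.measurableSet.compl
      intro y hy
      exact mul_le_mul_of_nonneg_left (hKs hy).le (gaussianKernel_nonneg hτ.le _)
  _ ≤ ∫ y, gaussianKernel n τ (x - y) * F y := by
      apply setIntegral_le_integral (hint x)
      exact Eventually.of_forall fun y => mul_nonneg (gaussianKernel_nonneg hτ.le _) (hF0 y)

end Gaussian
/-- the liminf integral inequality (inequality (3.4) of the paper).
If each `φᵢ` tends to its supremum at space infinity, then for every `t ∈ [0,T)`
the liminf at space infinity of `uᵢ(t,·)` dominates
`sup φᵢ + ∫₀ᵗ hᵢ(s) (liminf uᵢ(s))^{pᵢᵢ} (liminf uⱼ(s))^{pᵢⱼ} ds`. -/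
theorem statement4 (n : ℕ) (hn : 1 ≤ n)
    (p : Fin 2 → Fin 2 → ℝ) (hp : ∀ i j, 0 ≤ p i j)
    (h k : Fin 2 → ℝ → ℝ)
    (hhc : ∀ i, ContinuousOn (h i) (Set.Ici 0))
    (hhp : ∀ i, ∀ t : ℝ, 0 ≤ t → 0 < h i t)
    (hkc : ∀ i, ContinuousOn (k i) (Set.Ici 0))
    (hkp : ∀ i, ∀ t : ℝ, 0 ≤ t → 0 < k i t)
    (φ : Fin 2 → EuclideanSpace ℝ (Fin n) → ℝ)
    (hφc : ∀ i, Continuous (φ i))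
    (hφnn : ∀ i x, 0 ≤ φ i x)
    (hφb : ∀ i, ∃ C : ℝ, ∀ x, φ i x ≤ C)
    (hφlim : ∀ i, Filter.Tendsto (φ i)
      (Filter.cocompact (EuclideanSpace ℝ (Fin n))) (nhds (⨆ x, φ i x)))
    (T : ℝ) (hT : 0 < T)
    (u : Fin 2 → ℝ → EuclideanSpace ℝ (Fin n) → ℝ)
    (hu : IsMildSolutionIco n p h k φ T u) :
    ∀ i, ∀ t ∈ Set.Ico (0:ℝ) T,
      (⨆ x, φ i x) +
          (∫ s in (0:ℝ)..t,
            h i s *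
              (Filter.liminf (fun x => u i s x)
                (Filter.cocompact (EuclideanSpace ℝ (Fin n)))) ^ p i i *
              (Filter.liminf (fun x => u (1 - i) s x)
                (Filter.cocompact (EuclideanSpace ℝ (Fin n)))) ^ p i (1 - i)) ≤
        Filter.liminf (fun x => u i t x)
          (Filter.cocompact (EuclideanSpace ℝ (Fin n))) := by
  obtain ⟨humeas, hunn, hubdd, hu0, huduh⟩ := hu
  haveI hnt : Nontrivial (EuclideanSpace ℝ (Fin n)) := by
    apply Module.nontrivial_of_finrank_pos (R := ℝ)
    rw [finrank_euclideanSpace_fin]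
    omega
  haveI hcg : (Filter.cocompact (EuclideanSpace ℝ (Fin n))).IsCountablyGenerated := by
    rw [← Metric.cobounded_eq_cocompact, ← comap_norm_atTop]
    infer_instance
  intro i t htm
  obtain ⟨ht0, htT⟩ := htm
  rcases eq_or_lt_of_le ht0 with h0 | h0
  · -- t = 0
    rw [← h0, intervalIntegral.integral_same, add_zero]
    have he : (fun x => u i 0 x) = φ i := funext fun x => hu0 i x
    rw [he, (hφlim i).liminf_eq]
  · -- 0 < t
    obtain ⟨C, hCb⟩ := hubdd ((t + T)/2) (by linarith)
    have hC : ∀ i' : Fin 2, ∀ s ∈ Icc (0:ℝ) t, ∀ x, u i' s x ≤ C := fun i' s hs x =>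
      hCb i' s ⟨hs.1, hs.2.trans (by linarith)⟩ x
    have hC0 : 0 ≤ C := (hunn i 0 0).trans (hC i 0 ⟨le_refl 0, ht0⟩ 0)
    -- terms
    set F : ℝ → EuclideanSpace ℝ (Fin n) → ℝ :=
      fun s y => u i s y ^ p i i * u (1 - i) s y ^ p i (1 - i) with hFdef
    set V : ℝ → EuclideanSpace ℝ (Fin n) → ℝ :=
      fun s x => ∫ y, gaussianKernel n (Kint (k i) s t) (x - y) * F s y with hVdef
    set A : EuclideanSpace ℝ (Fin n) → ℝ :=
      fun x => ∫ y, gaussianKernel n (Kint (k i) 0 t) (x - y) * φ i y with hAdef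
    set B : EuclideanSpace ℝ (Fin n) → ℝ :=
      fun x => ∫ s in (0:ℝ)..t, h i s * V s x with hBdef
    have hdu : ∀ x, u i t x = A x + B x := fun x => huduh i t ⟨h0, htT⟩ x
    -- K basic facts
    have hkInt : IntervalIntegrable (k i) volume 0 t :=
      ((hkc i).mono (by rw [Set.uIcc_of_le ht0]; exact Icc_subset_Ici_self)).intervalIntegrable
    have hKpos : ∀ s ∈ Ico (0:ℝ) t, 0 < Kint (k i) s t := by
      intro s hs
      apply intervalIntegral.intervalIntegral_pos_of_pos_on
      · apply hkInt.mono_set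
        rw [Set.uIcc_of_le ht0, Set.uIcc_of_le hs.2.le]
        exact Icc_subset_Icc hs.1 le_rfl
      · exact fun r hr => hkp i r (le_trans hs.1 hr.1.le)
      · exact hs.2
    have hKnn : ∀ s ∈ Icc (0:ℝ) t, 0 ≤ Kint (k i) s t := by
      intro s hs
      apply intervalIntegral.integral_nonneg hs.2
      exact fun r hr => (hkp i r (le_trans hs.1 hr.1)).le
    have hK0pos : 0 < Kint (k i) 0 t := hKpos 0 ⟨le_refl 0, h0⟩
    -- F bounds
    set CF : ℝ := C ^ p i i * C ^ p i (1 - i) with hCFdef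
    have hCF0 : 0 ≤ CF := mul_nonneg (Real.rpow_nonneg hC0 _) (Real.rpow_nonneg hC0 _)
    have hF0 : ∀ s y, 0 ≤ F s y := fun s y =>
      mul_nonneg (Real.rpow_nonneg (hunn i s y) _) (Real.rpow_nonneg (hunn _ s y) _)
    have hFle : ∀ s ∈ Icc (0:ℝ) t, ∀ y, F s y ≤ CF := fun s hs y =>
      mul_le_mul (Real.rpow_le_rpow (hunn i s y) (hC i s hs y) (hp i i))
        (Real.rpow_le_rpow (hunn _ s y) (hC _ s hs y) (hp i _))
        (Real.rpow_nonneg (hunn _ s y) _) (Real.rpow_nonneg hC0 _)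
    have humeas' : ∀ (i' : Fin 2) s, Measurable fun y => u i' s y := fun i' s =>
      (humeas i').comp (measurable_prodMk_left)
    have hFmeas : ∀ s, Measurable (F s) := fun s =>
      (measurable_rpow_const_of_nonneg (humeas' i s) (fun y => hunn i s y) _).mul
        (measurable_rpow_const_of_nonneg (humeas' _ s) (fun y => hunn _ s y) _)
    -- V bounds
    have hV0 : ∀ s ∈ Icc (0:ℝ) t, ∀ x, 0 ≤ V s x := fun s hs x => integral_nonneg fun y =>
      mul_nonneg (gaussianKernel_nonneg (hKnn s hs) _) (hF0 s y)
    have hGzero : ∀ z : EuclideanSpace ℝ (Fin n), gaussianKernel n 0 z = 0 := by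
      intro z
      have hne : -(n:ℝ)/2 ≠ 0 := by
        have : (0:ℝ) < (n:ℝ) := by exact_mod_cast Nat.lt_of_lt_of_le Nat.zero_lt_one hn
        intro hcon
        rw [div_eq_zero_iff] at hcon
        rcases hcon with hcon | hcon
        · linarith [neg_eq_zero.mp hcon]
        · norm_num at hcon
      unfold gaussianKernel
      rw [mul_zero, Real.zero_rpow hne, zero_mul]
    have hVleIcc : ∀ s ∈ Icc (0:ℝ) t, ∀ x, V s x ≤ CF := by
      intro s hs x
      rcases eq_or_lt_of_le hs.2 with he | hlt
      · have hz : V s x = 0 := by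
          have hK0 : Kint (k i) s t = 0 := by
            rw [he]
            exact intervalIntegral.integral_same
          simp only [hVdef, hK0, hGzero, zero_mul, integral_zero]
        rw [hz]; exact hCF0
      · exact conv_le_bound (hKpos s ⟨hs.1, hlt⟩) (hFmeas s).aestronglyMeasurable
          (hF0 s) (hFle s hs) x
    -- A bounds
    obtain ⟨Mφ, hMφ⟩ := hφb i
    have hMφ0 : 0 ≤ Mφ := (hφnn i 0).trans (hMφ 0)
    have hA0 : ∀ x, 0 ≤ A x := fun x => integral_nonneg fun y =>
      mul_nonneg (gaussianKernel_nonneg hK0pos.le _) (hφnn i y)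
    have hAM : ∀ x, A x ≤ Mφ := fun x =>
      conv_le_bound hK0pos (hφc i).aestronglyMeasurable (hφnn i) hMφ x
    have hlimA : (⨆ x, φ i x) ≤ liminf A (cocompact (EuclideanSpace ℝ (Fin n))) := by
      have h1 := le_liminf_conv hK0pos (hφc i).aestronglyMeasurable (hφnn i) hMφ
      rwa [(hφlim i).liminf_eq] at h1
    -- B bounds
    have hB0 : ∀ x, 0 ≤ B x := fun x => intervalIntegral.integral_nonneg ht0 fun s hs =>
      mul_nonneg (hhp i s hs.1).le (hV0 s hs x)
    have hBle : ∀ x, B x ≤ C := fun x => by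
      have h1 := hdu x
      have h2 := hA0 x
      have h3 := hC i t ⟨ht0, le_refl t⟩ x
      linarith
    -- liminf bounds on L
    have hL0 : ∀ (i' : Fin 2), ∀ s ∈ Icc (0:ℝ) t,
        0 ≤ liminf (fun x => u i' s x) (cocompact (EuclideanSpace ℝ (Fin n))) :=
      fun i' s hs => my_liminf_nonneg (fun x => hunn i' s x) (fun x => hC i' s hs x)
    -- main inequality for B
    have hlimB : (∫ s in (0:ℝ)..t,
        h i s *
          (Filter.liminf (fun x => u i s x)
            (Filter.cocompact (EuclideanSpace ℝ (Fin n)))) ^ p i i *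
          (Filter.liminf (fun x => u (1 - i) s x)
            (Filter.cocompact (EuclideanSpace ℝ (Fin n)))) ^ p i (1 - i)) ≤
        liminf B (cocompact (EuclideanSpace ℝ (Fin n))) := by
      -- clamp machinery
      set cl : ℝ → ℝ := fun s => min (max s 0) t with hcl
      have hclmem : ∀ s, cl s ∈ Icc (0:ℝ) t := fun s =>
        ⟨le_min (le_max_right s 0) ht0, min_le_right _ _⟩
      have hclcont : Continuous cl := (continuous_id.max continuous_const).min continuous_const
      have hcleq : ∀ s ∈ Icc (0:ℝ) t, cl s = s := fun s hs => by
        show min (max s 0) t = s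
        rw [max_eq_left hs.1, min_eq_left hs.2]
      set κ : ℝ → ℝ := fun s => Kint (k i) (cl s) t with hκ
      have hprim : ContinuousOn (fun b => Kint (k i) b t) (Icc 0 t) := by
        have h1 : ContinuousOn (fun b => ∫ r in (0:ℝ)..b, k i r) (Icc 0 t) := by
          have h2 := intervalIntegral.continuousOn_primitive_interval' hkInt
            (by rw [Set.uIcc_of_le ht0]; exact ⟨le_refl 0, ht0⟩)
          rwa [Set.uIcc_of_le ht0] at h2
        have h3 : ContinuousOn
            (fun b => (∫ r in (0:ℝ)..t, k i r) - ∫ r in (0:ℝ)..b, k i r) (Icc 0 t) :=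
          continuousOn_const.sub h1
        refine h3.congr fun b hb => ?_
        have hadd : (∫ r in (0:ℝ)..b, k i r) + ∫ r in b..t, k i r = ∫ r in (0:ℝ)..t, k i r :=
          intervalIntegral.integral_add_adjacent_intervals
            (hkInt.mono_set (by
              rw [Set.uIcc_of_le ht0, Set.uIcc_of_le hb.1]
              exact Icc_subset_Icc le_rfl hb.2))
            (hkInt.mono_set (by
              rw [Set.uIcc_of_le ht0, Set.uIcc_of_le hb.2]
              exact Icc_subset_Icc hb.1 le_rfl))
        show Kint (k i) b t = _
        unfold Kint
        linarith
      have hκcont : Continuous κ := hprim.comp_continuous hclcont hclmem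
      have hκnn : ∀ s, 0 ≤ κ s := fun s => hKnn (cl s) (hclmem s)
      have hκeq : ∀ s ∈ Icc (0:ℝ) t, κ s = Kint (k i) s t := fun s hs => by
        show Kint (k i) (cl s) t = Kint (k i) s t
        rw [hcleq s hs]
      -- h machinery
      have hhcont : Continuous fun s => h i (cl s) :=
        ((hhc i).mono Icc_subset_Ici_self).comp_continuous hclcont hclmem
      obtain ⟨Hb, hHb⟩ := (isCompact_Icc : IsCompact (Icc (0:ℝ) t)).exists_bound_of_continuousOn
        ((hhc i).mono Icc_subset_Ici_self)
      have hHb' : ∀ s ∈ Icc (0:ℝ) t, h i s ≤ Hb := fun s hs =>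
        (le_abs_self _).trans (by simpa [Real.norm_eq_abs] using hHb s hs)
      have hHb0 : 0 ≤ Hb := le_trans (norm_nonneg _) (hHb 0 ⟨le_refl 0, ht0⟩)
      -- joint measurability
      have hGkmeas : ∀ x : EuclideanSpace ℝ (Fin n),
          Measurable fun q : ℝ × EuclideanSpace ℝ (Fin n) =>
            gaussianKernel n (κ q.1) (x - q.2) := by
        intro x
        have hb : Measurable fun q : ℝ × EuclideanSpace ℝ (Fin n) => 4 * Real.pi * κ q.1 :=
          (hκcont.measurable.comp measurable_fst).const_mul (4 * Real.pi)
        have hbase : Measurable fun q : ℝ × EuclideanSpace ℝ (Fin n) =>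
            (4 * Real.pi * κ q.1) ^ (-(n:ℝ)/2) :=
          measurable_rpow_const_of_nonneg hb
            (fun q => mul_nonneg (by positivity) (hκnn q.1)) _
        have hexp : Measurable fun q : ℝ × EuclideanSpace ℝ (Fin n) =>
            Real.exp (-‖x - q.2‖ ^ 2 / (4 * κ q.1)) := by
          apply Measurable.exp
          apply Measurable.div
          · exact ((continuous_norm.comp (continuous_const.sub continuous_snd)).pow 2).neg.measurable
          · exact (hκcont.measurable.comp measurable_fst).const_mul 4
        exact hbase.mul hexp
      have hFqmeas : Measurable fun q : ℝ × EuclideanSpace ℝ (Fin n) => F q.1 q.2 := by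
        apply Measurable.mul
        · exact measurable_rpow_const_of_nonneg (humeas i) (fun q => hunn i q.1 q.2) _
        · exact measurable_rpow_const_of_nonneg (humeas _) (fun q => hunn _ q.1 q.2) _
      have hVmeas : ∀ x : EuclideanSpace ℝ (Fin n),
          Measurable fun s => ∫ y, gaussianKernel n (κ s) (x - y) * F s y := by
        intro x
        have hjm : Measurable fun q : ℝ × EuclideanSpace ℝ (Fin n) =>
            gaussianKernel n (κ q.1) (x - q.2) * F q.1 q.2 := (hGkmeas x).mul hFqmeas
        exact hjm.stronglyMeasurable.integral_prod_right'.measurable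
      have hfm : ∀ x, AEStronglyMeasurable (fun s => h i s * V s x)
          (volume.restrict (Ioc (0:ℝ) t)) := by
        intro x
        have hmeas2 : Measurable fun s =>
            h i (cl s) * ∫ y, gaussianKernel n (κ s) (x - y) * F s y :=
          hhcont.measurable.mul (hVmeas x)
        refine hmeas2.aestronglyMeasurable.congr ?_
        filter_upwards [ae_restrict_mem measurableSet_Ioc] with s hs
        have hs' : s ∈ Icc (0:ℝ) t := Ioc_subset_Icc_self hs
        rw [hcleq s hs', hκeq s hs']
      haveI hfinm : IsFiniteMeasure (volume.restrict (Ioc (0:ℝ) t)) :=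
        ⟨by rw [Measure.restrict_apply_univ]; exact measure_Ioc_lt_top⟩
      have haeIoo : ∀ᵐ s ∂volume.restrict (Ioc (0:ℝ) t), s ∈ Ioo (0:ℝ) t := by
        have h1 : (volume.restrict (Ioc (0:ℝ) t)) {t} = 0 :=
          le_antisymm ((Measure.restrict_apply_le _ _).trans (by simp)) zero_le
        filter_upwards [ae_restrict_mem measurableSet_Ioc, measure_eq_zero_iff_ae_notMem.mp h1]
          with s hs hs2
        exact ⟨hs.1, lt_of_le_of_ne hs.2 fun he => hs2 (by simp [he])⟩
      by_cases hgint : IntervalIntegrable (fun s =>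
          h i s *
            (Filter.liminf (fun x => u i s x)
              (Filter.cocompact (EuclideanSpace ℝ (Fin n)))) ^ p i i *
            (Filter.liminf (fun x => u (1 - i) s x)
              (Filter.cocompact (EuclideanSpace ℝ (Fin n)))) ^ p i (1 - i)) volume 0 t
      · -- integrable case : Fatou argument
        by_contra hcon
        push_neg at hcon
        obtain ⟨c, hc1, hc2⟩ := exists_between hcon
        obtain ⟨xs, hxs, hxsle⟩ := my_exists_seq hB0 hBle hc1
        have hbd : ∀ m, ∀ᵐ s ∂volume.restrict (Ioc (0:ℝ) t),
            0 ≤ h i s * V s (xs m) ∧ h i s * V s (xs m) ≤ Hb * CF := by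
          intro m
          filter_upwards [haeIoo] with s hs
          have hsI : s ∈ Icc (0:ℝ) t := ⟨hs.1.le, hs.2.le⟩
          exact ⟨mul_nonneg (hhp i s hs.1.le).le (hV0 s hsI _),
            mul_le_mul (hHb' s hsI) (hVleIcc s hsI _) (hV0 s hsI _) hHb0⟩
        have hgi : Integrable (fun s =>
            h i s *
              (Filter.liminf (fun x => u i s x)
                (Filter.cocompact (EuclideanSpace ℝ (Fin n)))) ^ p i i *
              (Filter.liminf (fun x => u (1 - i) s x)
                (Filter.cocompact (EuclideanSpace ℝ (Fin n)))) ^ p i (1 - i))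
            (volume.restrict (Ioc (0:ℝ) t)) :=
          (intervalIntegrable_iff_integrableOn_Ioc_of_le ht0).mp hgint
        have hg0 : 0 ≤ᵐ[volume.restrict (Ioc (0:ℝ) t)] (fun s =>
            h i s *
              (Filter.liminf (fun x => u i s x)
                (Filter.cocompact (EuclideanSpace ℝ (Fin n)))) ^ p i i *
              (Filter.liminf (fun x => u (1 - i) s x)
                (Filter.cocompact (EuclideanSpace ℝ (Fin n)))) ^ p i (1 - i)) := by
          filter_upwards [haeIoo] with s hs
          have hsI : s ∈ Icc (0:ℝ) t := ⟨hs.1.le, hs.2.le⟩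
          exact mul_nonneg (mul_nonneg (hhp i s hs.1.le).le
            (Real.rpow_nonneg (hL0 i s hsI) _)) (Real.rpow_nonneg (hL0 _ s hsI) _)
        have hle : ∀ᵐ s ∂volume.restrict (Ioc (0:ℝ) t),
            (h i s *
              (Filter.liminf (fun x => u i s x)
                (Filter.cocompact (EuclideanSpace ℝ (Fin n)))) ^ p i i *
              (Filter.liminf (fun x => u (1 - i) s x)
                (Filter.cocompact (EuclideanSpace ℝ (Fin n)))) ^ p i (1 - i)) ≤
            liminf (fun m => h i s * V s (xs m)) atTop := by
          filter_upwards [haeIoo] with s hs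
          have hsI : s ∈ Icc (0:ℝ) t := ⟨hs.1.le, hs.2.le⟩
          have hτ := hKpos s ⟨hs.1.le, hs.2⟩
          have s1 : (Filter.liminf (fun x => u i s x)
              (Filter.cocompact (EuclideanSpace ℝ (Fin n)))) ^ p i i ≤
              liminf (fun x => u i s x ^ p i i) (cocompact (EuclideanSpace ℝ (Fin n))) :=
            my_liminf_rpow (fun x => hunn i s x) (fun x => hC i s hsI x) (hp i i)
          have s2 : (Filter.liminf (fun x => u (1 - i) s x)
              (Filter.cocompact (EuclideanSpace ℝ (Fin n)))) ^ p i (1 - i) ≤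
              liminf (fun x => u (1 - i) s x ^ p i (1 - i))
                (cocompact (EuclideanSpace ℝ (Fin n))) :=
            my_liminf_rpow (fun x => hunn _ s x) (fun x => hC _ s hsI x) (hp i _)
          have s3 : liminf (fun x => u i s x ^ p i i) (cocompact (EuclideanSpace ℝ (Fin n))) *
              liminf (fun x => u (1 - i) s x ^ p i (1 - i))
                (cocompact (EuclideanSpace ℝ (Fin n))) ≤
              liminf (F s) (cocompact (EuclideanSpace ℝ (Fin n))) :=
            my_liminf_mul (C := max (C ^ p i i) (C ^ p i (1 - i)))
              (fun x => Real.rpow_nonneg (hunn i s x) _)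
              (fun x => le_max_of_le_left
                (Real.rpow_le_rpow (hunn i s x) (hC i s hsI x) (hp i i)))
              (fun x => Real.rpow_nonneg (hunn _ s x) _)
              (fun x => le_max_of_le_right
                (Real.rpow_le_rpow (hunn _ s x) (hC _ s hsI x) (hp i _)))
          have s4 : liminf (F s) (cocompact (EuclideanSpace ℝ (Fin n))) ≤
              liminf (fun x => V s x) (cocompact (EuclideanSpace ℝ (Fin n))) :=
            le_liminf_conv hτ (hFmeas s).aestronglyMeasurable (hF0 s) (hFle s hsI)
          have s5 : liminf (fun x => V s x) (cocompact (EuclideanSpace ℝ (Fin n))) ≤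
              liminf (fun m => V s (xs m)) atTop :=
            my_liminf_comp hxs (fun x => hV0 s hsI x) (fun x => hVleIcc s hsI x)
          have t1 : (Filter.liminf (fun x => u i s x)
              (Filter.cocompact (EuclideanSpace ℝ (Fin n)))) ^ p i i *
              (Filter.liminf (fun x => u (1 - i) s x)
                (Filter.cocompact (EuclideanSpace ℝ (Fin n)))) ^ p i (1 - i) ≤
              liminf (fun m => V s (xs m)) atTop := by
            refine le_trans (mul_le_mul s1 s2 (Real.rpow_nonneg (hL0 _ s hsI) _)
              (my_liminf_nonneg (fun x => Real.rpow_nonneg (hunn i s x) _)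
                (fun x => Real.rpow_le_rpow (hunn i s x) (hC i s hsI x) (hp i i)))) ?_
            exact le_trans s3 (le_trans s4 s5)
          calc h i s *
              (Filter.liminf (fun x => u i s x)
                (Filter.cocompact (EuclideanSpace ℝ (Fin n)))) ^ p i i *
              (Filter.liminf (fun x => u (1 - i) s x)
                (Filter.cocompact (EuclideanSpace ℝ (Fin n)))) ^ p i (1 - i)
              = h i s *
                ((Filter.liminf (fun x => u i s x)
                  (Filter.cocompact (EuclideanSpace ℝ (Fin n)))) ^ p i i *
                (Filter.liminf (fun x => u (1 - i) s x)
                  (Filter.cocompact (EuclideanSpace ℝ (Fin n)))) ^ p i (1 - i)) := by ring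
          _ ≤ h i s * liminf (fun m => V s (xs m)) atTop :=
              mul_le_mul_of_nonneg_left t1 (hhp i s hs.1.le).le
          _ ≤ liminf (fun m => h i s * V s (xs m)) atTop :=
              my_liminf_const_mul (fun m => hV0 s hsI _) (fun m => hVleIcc s hsI _)
                (hhp i s hs.1.le).le
        have hfat := my_fatou (D := Hb * CF) (fun m => hfm (xs m)) hbd hgi hg0 hle
        have hBm : ∀ m, (∫ s in Ioc (0:ℝ) t, h i s * V s (xs m)) = B (xs m) :=
          fun m => (intervalIntegral.integral_of_le ht0).symm
        rw [liminf_congr (Eventually.of_forall hBm)] at hfat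
        have hIeq : (∫ s in Ioc (0:ℝ) t,
            h i s *
              (Filter.liminf (fun x => u i s x)
                (Filter.cocompact (EuclideanSpace ℝ (Fin n)))) ^ p i i *
              (Filter.liminf (fun x => u (1 - i) s x)
                (Filter.cocompact (EuclideanSpace ℝ (Fin n)))) ^ p i (1 - i)) =
            ∫ s in (0:ℝ)..t,
            h i s *
              (Filter.liminf (fun x => u i s x)
                (Filter.cocompact (EuclideanSpace ℝ (Fin n)))) ^ p i i *
              (Filter.liminf (fun x => u (1 - i) s x)
                (Filter.cocompact (EuclideanSpace ℝ (Fin n)))) ^ p i (1 - i) :=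
          (intervalIntegral.integral_of_le ht0).symm
        rw [hIeq] at hfat
        have hfin2 := le_trans hfat hxsle
        linarith
      · -- non-integrable case : integral is zero
        rw [intervalIntegral.integral_undef hgint]
        exact my_liminf_nonneg hB0 hBle

    -- conclusion
    have hfinal : liminf A (cocompact (EuclideanSpace ℝ (Fin n))) +
        liminf B (cocompact (EuclideanSpace ℝ (Fin n))) ≤
        liminf (fun x => u i t x) (cocompact (EuclideanSpace ℝ (Fin n))) := by
      have heq : (fun x => u i t x) = fun x => A x + B x := funext hdu
      rw [heq]
      exact my_liminf_add (C := Mφ + C) hA0 (fun x => (hAM x).trans (by linarith))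
        hB0 (fun x => (hBle x).trans (by linarith))
    exact le_trans (add_le_add hlimA hlimB) hfinal
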